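/- Let t > 0, k ∈ ℝ, k ≠ 0, and let M = k(A* − A) on L²([0,t),ℂ) where A is the Volterra operator and A* its adjoint. Consider the block operator T(f₁,f₂) = (M f₂, −M f₁) on L²([0,t),ℂ)². If λ ≠ 0 and (e₁,e₂) is an eigenvector of T with eigenvalue λ and e₁, e₂ are twice continuously differentiable, then e₁'' + (4k²/λ²) e₁ = 0 and e₂'' + (4k²/λ²) e₂ = 0. -/

import Mathlib

open MeasureTheory

lemma deriv_eqOn_Ico {t : ℝ} {f g : ℝ → ℂ} {s : ℝ} (ht : 0 < t) (hs : s ∈ Set.Ico (0:ℝ) t)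
    (hf : DifferentiableAt ℝ f s) (hg : DifferentiableAt ℝ g s)
    (h : ∀ x ∈ Set.Ico (0:ℝ) t, f x = g x) : deriv f s = deriv g s := by
  have hu : UniqueDiffWithinAt ℝ (Set.Ico (0:ℝ) t) s := by
    apply uniqueDiffWithinAt_convex (convex_Ico 0 t)
    · rw [interior_Ico]; exact Set.nonempty_Ioo.mpr ht
    · exact subset_closure hs
  have h1 : HasDerivWithinAt f (deriv f s) (Set.Ico (0:ℝ) t) s :=
    hf.hasDerivAt.hasDerivWithinAt
  have h2 : HasDerivWithinAt f (deriv g s) (Set.Ico (0:ℝ) t) s :=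
    (hg.hasDerivAt.hasDerivWithinAt).congr (fun x hx => h x hx) (h s hs)
  have := h1.derivWithin hu
  rw [← this, h2.derivWithin hu]

lemma hasDerivAt_M {t k : ℝ} {f : ℝ → ℂ} (hf : Continuous f) (x : ℝ) :
    HasDerivAt (fun x => (k:ℂ) * ((∫ τ in x..t, f τ) - ∫ τ in (0:ℝ)..x, f τ))
      (-2*k*f x) x := by
  have h1 : HasDerivAt (fun x => ∫ τ in t..x, f τ) (f x) x :=
    intervalIntegral.integral_hasDerivAt_right (hf.intervalIntegrable t x)
      (hf.stronglyMeasurableAtFilter _ _) hf.continuousAt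
  have h2 : HasDerivAt (fun x => ∫ τ in (0:ℝ)..x, f τ) (f x) x :=
    intervalIntegral.integral_hasDerivAt_right (hf.intervalIntegrable 0 x)
      (hf.stronglyMeasurableAtFilter _ _) hf.continuousAt
  have h3 : HasDerivAt (fun x => (k:ℂ) * (-(∫ τ in t..x, f τ) - ∫ τ in (0:ℝ)..x, f τ))
      ((k:ℂ) * (-(f x) - f x)) x := ((h1.neg.sub h2).const_mul (k:ℂ))
  have heq : (fun x => (k:ℂ) * ((∫ τ in x..t, f τ) - ∫ τ in (0:ℝ)..x, f τ)) =
      (fun x => (k:ℂ) * (-(∫ τ in t..x, f τ) - ∫ τ in (0:ℝ)..x, f τ)) := by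
    funext y; rw [intervalIntegral.integral_symm]
  rw [heq, show (-2*(k:ℂ)*f x) = (k:ℂ)*(-(f x) - f x) by ring]
  exact h3

/-- If `(e₁,e₂)` is a twice continuously differentiable eigenvector with eigenvalue
`λ ≠ 0` of the block operator `T(f₁,f₂) = (M f₂, -M f₁)`, `M = k(A* - A)`, then
`e₁'' + (4k²/λ²)e₁ = 0` and `e₂'' + (4k²/λ²)e₂ = 0` on `[0,t)`. -/
theorem stmt_2 (t k : ℝ) (ht : 0 < t) (hk : k ≠ 0) (lam : ℂ) (hlam : lam ≠ 0)
    (e₁ e₂ : ℝ → ℂ) (he₁ : ContDiff ℝ 2 e₁) (he₂ : ContDiff ℝ 2 e₂)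
    (hne : ¬(∀ s ∈ Set.Ico (0:ℝ) t, e₁ s = 0 ∧ e₂ s = 0))
    (heig1 : ∀ s ∈ Set.Ico (0:ℝ) t,
      (k:ℂ) * ((∫ τ in s..t, e₂ τ) - ∫ τ in (0:ℝ)..s, e₂ τ) = lam * e₁ s)
    (heig2 : ∀ s ∈ Set.Ico (0:ℝ) t,
      -((k:ℂ) * ((∫ τ in s..t, e₁ τ) - ∫ τ in (0:ℝ)..s, e₁ τ)) = lam * e₂ s) :
    ∀ s ∈ Set.Ico (0:ℝ) t,
      deriv (deriv e₁) s + (4*(k:ℂ)^2/lam^2) * e₁ s = 0 ∧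
      deriv (deriv e₂) s + (4*(k:ℂ)^2/lam^2) * e₂ s = 0 := by
  have hd1 : Differentiable ℝ e₁ := he₁.differentiable (by norm_num)
  have hd2 : Differentiable ℝ e₂ := he₂.differentiable (by norm_num)
  have hc1 : ContDiff ℝ 1 (deriv e₁) := ((contDiff_succ_iff_deriv (n:=1)).mp (by exact he₁)).2.2
  have hc2 : ContDiff ℝ 1 (deriv e₂) := ((contDiff_succ_iff_deriv (n:=1)).mp (by exact he₂)).2.2
  have hdd1 : Differentiable ℝ (deriv e₁) := hc1.differentiable one_ne_zero
  have hdd2 : Differentiable ℝ (deriv e₂) := hc2.differentiable one_ne_zero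
  -- first derivatives
  have D1 : ∀ s ∈ Set.Ico (0:ℝ) t, lam * deriv e₁ s = -2*k*e₂ s := by
    intro s hs
    have h := deriv_eqOn_Ico ht hs
      (f := fun x => lam * e₁ x)
      (g := fun x => (k:ℂ) * ((∫ τ in x..t, e₂ τ) - ∫ τ in (0:ℝ)..x, e₂ τ))
      ((hd1 s).const_mul lam) (hasDerivAt_M he₂.continuous s).differentiableAt
      (fun x hx => (heig1 x hx).symm)
    rw [deriv_const_mul lam (hd1 s), (hasDerivAt_M he₂.continuous s).deriv] at h
    exact h
  have D2 : ∀ s ∈ Set.Ico (0:ℝ) t, lam * deriv e₂ s = 2*k*e₁ s := by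
    intro s hs
    have h := deriv_eqOn_Ico ht hs
      (f := fun x => lam * e₂ x)
      (g := fun x => -((k:ℂ) * ((∫ τ in x..t, e₁ τ) - ∫ τ in (0:ℝ)..x, e₁ τ)))
      ((hd2 s).const_mul lam) (hasDerivAt_M he₁.continuous s).differentiableAt.neg
      (fun x hx => (heig2 x hx).symm)
    rw [deriv_const_mul lam (hd2 s), deriv.fun_neg, (hasDerivAt_M he₁.continuous s).deriv] at h
    rw [h]; ring
  -- second derivatives
  intro s hs
  have DD1 : lam * deriv (deriv e₁) s = -2*k * deriv e₂ s := by
    have h := deriv_eqOn_Ico ht hs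
      (f := fun x => lam * deriv e₁ x) (g := fun x => (-2*k : ℂ) * e₂ x)
      ((hdd1 s).const_mul lam) ((hd2 s).const_mul _)
      (fun x hx => by simpa using D1 x hx)
    rw [deriv_const_mul lam (hdd1 s), deriv_const_mul _ (hd2 s)] at h
    exact h
  have DD2 : lam * deriv (deriv e₂) s = 2*k * deriv e₁ s := by
    have h := deriv_eqOn_Ico ht hs
      (f := fun x => lam * deriv e₂ x) (g := fun x => ((2:ℂ)*k) * e₁ x)
      ((hdd2 s).const_mul lam) ((hd1 s).const_mul _)
      (fun x hx => by simpa using D2 x hx)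
    rw [deriv_const_mul lam (hdd2 s), deriv_const_mul _ (hd1 s)] at h
    exact h
  constructor
  · have h1 : lam^2 * deriv (deriv e₁) s = -4*k^2 * e₁ s := by
      have := D2 s hs
      calc lam^2 * deriv (deriv e₁) s = lam * (lam * deriv (deriv e₁) s) := by ring
        _ = lam * (-2*k * deriv e₂ s) := by rw [DD1]
        _ = -2*k * (lam * deriv e₂ s) := by ring
        _ = -2*k * (2*k*e₁ s) := by rw [this]
        _ = -4*k^2 * e₁ s := by ring
    field_simp
    linear_combination h1
  · have h1 : lam^2 * deriv (deriv e₂) s = -4*k^2 * e₂ s := by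
      have := D1 s hs
      calc lam^2 * deriv (deriv e₂) s = lam * (lam * deriv (deriv e₂) s) := by ring
        _ = lam * (2*k * deriv e₁ s) := by rw [DD2]
        _ = 2*k * (lam * deriv e₁ s) := by ring
        _ = 2*k * (-2*k*e₂ s) := by rw [this]
        _ = -4*k^2 * e₂ s := by ring
    field_simp
    linear_combination h1
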